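/- Let v(x) = −1/W₀(eˣ · W₀⁻¹(−1/r)) for r < 0, where W₀ is the principal real branch of the Lambert W function and W₀⁻¹(s) = s·e^s. Then v satisfies the differential equation dv/dx = v²/(1−v) on any interval where it is defined and v < 1. -/

import Mathlib

open Real

section aux

private lemma fm_deriv (t : ℝ) : HasDerivAt (fun t : ℝ => t * Real.exp t)
    ((1 + t) * Real.exp t) t := by
  have h := (hasDerivAt_id t).mul (Real.hasDerivAt_exp t)
  simp only [id_eq, one_mul] at h
  convert h using 1
  · rfl
  · rfl
  · rfl
  ring

private lemma fm_mono : StrictMonoOn (fun t : ℝ => t * Real.exp t) (Set.Ici (-1)) := by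
  apply strictMonoOn_of_deriv_pos (convex_Ici _)
  · exact (continuous_id.mul Real.continuous_exp).continuousOn
  · intro x hx
    rw [interior_Ici] at hx
    rw [(fm_deriv x).deriv]
    have : (0:ℝ) < 1 + x := by linarith [hx.out]
    positivity

end aux

/-- Let `W` be the principal real branch `W₀` of the Lambert function: on
`[−1/e, ∞)` it takes values in `[−1, ∞)` and satisfies `W(s)·e^{W(s)} = s`
(this characterizes `W₀` there). For `r < 0`, the function
`v(x) = −1/W₀(eˣ · W₀⁻¹(−1/r))`, where `W₀⁻¹(s) = s·e^s`, satisfies the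
differential equation `dv/dx = v²/(1−v)` at every point where `v < 1`. -/
theorem stmt17 (W : ℝ → ℝ)
    (hW : ∀ s : ℝ, -Real.exp (-1) ≤ s → -1 ≤ W s ∧ W s * Real.exp (W s) = s)
    (r : ℝ) (hr : r < 0) :
    ∀ x : ℝ,
      (fun y : ℝ => -1 / W (Real.exp y * ((-1 / r) * Real.exp (-1 / r)))) x < 1 →
      HasDerivAt (fun y : ℝ => -1 / W (Real.exp y * ((-1 / r) * Real.exp (-1 / r))))
        (((fun y : ℝ => -1 / W (Real.exp y * ((-1 / r) * Real.exp (-1 / r)))) x) ^ 2 /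
          (1 - (fun y : ℝ => -1 / W (Real.exp y * ((-1 / r) * Real.exp (-1 / r)))) x)) x := by
  intro x _
  set c : ℝ := (-1 / r) * Real.exp (-1 / r) with hc
  have hrinv : (0:ℝ) < -1 / r := by
    rw [div_pos_iff]
    right
    constructor <;> linarith
  have hcpos : 0 < c := by positivity
  -- basic facts about W on positive inputs
  have hWpos : ∀ s : ℝ, 0 < s → 0 < W s ∧ W s * Real.exp (W s) = s := by
    intro s hs
    obtain ⟨h1, h2⟩ := hW s (le_trans (by linarith [Real.exp_pos (-1:ℝ)]) hs.le)
    refine ⟨?_, h2⟩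
    by_contra h
    push_neg at h
    have := mul_nonpos_of_nonpos_of_nonneg h (Real.exp_pos (W s)).le
    linarith
  -- continuity of W at positive points
  have hWcont : ∀ s₀ : ℝ, 0 < s₀ → ContinuousAt W s₀ := by
    intro s₀ hs₀
    obtain ⟨hw₀, he₀⟩ := hWpos s₀ hs₀
    rw [Metric.continuousAt_iff]
    intro ε hε
    set ε' : ℝ := min ε (W s₀ / 2) with hε'
    have hε'pos : 0 < ε' := lt_min hε (by linarith)
    have hε'le : ε' ≤ W s₀ / 2 := min_le_right _ _
    set f : ℝ → ℝ := fun t => t * Real.exp t with hf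
    have hmem1 : W s₀ - ε' ∈ Set.Ici (-1 : ℝ) := by
      simp only [Set.mem_Ici]; linarith
    have hmem2 : W s₀ ∈ Set.Ici (-1 : ℝ) := by simp only [Set.mem_Ici]; linarith
    have hmem3 : W s₀ + ε' ∈ Set.Ici (-1 : ℝ) := by simp only [Set.mem_Ici]; linarith
    have hlt1 : f (W s₀ - ε') < s₀ := by
      have := fm_mono hmem1 hmem2 (by linarith)
      simpa [hf, he₀] using this
    have hlt2 : s₀ < f (W s₀ + ε') := by
      have := fm_mono hmem2 hmem3 (by linarith)
      simpa [hf, he₀] using this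
    refine ⟨min (s₀ - f (W s₀ - ε')) (f (W s₀ + ε') - s₀), lt_min (by linarith) (by linarith), ?_⟩
    intro s hs
    rw [Real.dist_eq] at hs ⊢
    have habs := abs_lt.mp hs
    have hspos : 0 < s := by
      have h1 : f (W s₀ - ε') < s := by
        have := habs.1
        have := min_le_left (s₀ - f (W s₀ - ε')) (f (W s₀ + ε') - s₀)
        linarith
      have : (0:ℝ) ≤ f (W s₀ - ε') := by
        by_cases h : 0 ≤ W s₀ - ε'
        · have : 0 ≤ (W s₀ - ε') * Real.exp (W s₀ - ε') := by positivity
          simpa [hf] using this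
        · push_neg at h
          -- f(W s₀ - ε') could be negative; but then still f < s and we need s > 0
          exact absurd (by linarith : W s₀ / 2 < ε') (not_lt.mpr hε'le)
      linarith
    obtain ⟨hwpos, hwe⟩ := hWpos s hspos
    have hWmem : W s ∈ Set.Ici (-1 : ℝ) := by simp only [Set.mem_Ici]; linarith
    have h1 : f (W s₀ - ε') < f (W s) := by
      have h1 : f (W s₀ - ε') < s := by
        have := min_le_left (s₀ - f (W s₀ - ε')) (f (W s₀ + ε') - s₀)
        linarith [habs.1]
      simpa [hf, hwe] using h1
    have h2 : f (W s) < f (W s₀ + ε') := by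
      have h2 : s < f (W s₀ + ε') := by
        have := min_le_right (s₀ - f (W s₀ - ε')) (f (W s₀ + ε') - s₀)
        linarith [habs.2]
      simpa [hf, hwe] using h2
    have hgt : W s₀ - ε' < W s := by
      by_contra h
      push_neg at h
      exact absurd (fm_mono.monotoneOn hWmem hmem1 h) (not_le.mpr h1)
    have hlt : W s < W s₀ + ε' := by
      by_contra h
      push_neg at h
      exact absurd (fm_mono.monotoneOn hmem3 hWmem h) (not_le.mpr h2)
    rw [abs_lt]
    constructor <;> linarith [min_le_left ε (W s₀ / 2)]
  -- derivative of W at positive points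
  have hWderiv : ∀ s₀ : ℝ, 0 < s₀ →
      HasDerivAt W ((1 + W s₀) * Real.exp (W s₀))⁻¹ s₀ := by
    intro s₀ hs₀
    obtain ⟨hw₀, he₀⟩ := hWpos s₀ hs₀
    refine HasDerivAt.of_local_left_inverse (hWcont s₀ hs₀) (fm_deriv (W s₀)) ?_ ?_
    · have : (0:ℝ) < 1 + W s₀ := by linarith
      positivity
    · filter_upwards [eventually_gt_nhds hs₀] with s hs
      exact (hWpos s hs).2
  -- now the main computation
  set w : ℝ := W (Real.exp x * c) with hwdef
  have harg : 0 < Real.exp x * c := by positivity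
  obtain ⟨hwpos, hwe⟩ := hWpos _ harg
  have hu : HasDerivAt (fun y : ℝ => Real.exp y * c) (Real.exp x * c) x := by
    simpa using (Real.hasDerivAt_exp x).mul_const c
  have hcomp : HasDerivAt (fun y : ℝ => W (Real.exp y * c))
      (((1 + w) * Real.exp w)⁻¹ * (Real.exp x * c)) x :=
    (hWderiv _ harg).comp x hu
  have hne : w ≠ 0 := hwpos.ne'
  have h1w : (0:ℝ) < 1 + w := by linarith
  have hmain := (hasDerivAt_const x (-1:ℝ)).div hcomp hne
  have hval : Real.exp x * c = w * Real.exp w := hwe.symm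
  have hexp : Real.exp w ≠ 0 := (Real.exp_pos w).ne'
  clear_value w c
  convert hmain using 1
  · rfl
  · rfl
  · rfl
  rw [← hwdef, hval]
  field_simp
  simp only [← hwdef]
  rw [show w - -1 = 1 + w by ring, mul_div_assoc, div_self h1w.ne']
  ring
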